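/- Let X and Y be metric spaces and q > 1. A point (x,y) in the q-product X ×_q Y (with metric d_q((x₁,y₁),(x₂,y₂)) = (d_X(x₁,x₂)^q + d_Y(y₁,y₂)^q)^(1/q)) is a midpoint of (x₁,y₁) and (x₂,y₂) if and only if x is a midpoint of x₁ and x₂ in X and y is a midpoint of y₁ and y₂ in Y. -/

import Mathlib

/-- The `q`-product distance on `X × Y`:
`d_q((x₁,y₁),(x₂,y₂)) = (d_X(x₁,x₂)^q + d_Y(y₁,y₂)^q)^(1/q)`. -/
noncomputable def dq {X Y : Type*} [MetricSpace X] [MetricSpace Y] (q : ℝ) (a b : X × Y) : ℝ :=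
  (dist a.1 b.1 ^ q + dist a.2 b.2 ^ q) ^ (1 / q)

/-- Convexity of `t ↦ t^q`. -/
lemma half_rpow_le {q a b : ℝ} (hq : 1 < q) (ha : 0 ≤ a) (hb : 0 ≤ b) :
    ((a + b) / 2) ^ q ≤ (a ^ q + b ^ q) / 2 := by
  have := (convexOn_rpow hq.le).2 (Set.mem_Ici.2 ha) (Set.mem_Ici.2 hb)
    (by norm_num : (0:ℝ) ≤ 1/2) (by norm_num : (0:ℝ) ≤ 1/2) (by norm_num)
  simp only [smul_eq_mul] at this
  calc ((a + b) / 2) ^ q = (1/2 * a + 1/2 * b) ^ q := by ring_nf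
    _ ≤ 1/2 * a ^ q + 1/2 * b ^ q := this
    _ = (a ^ q + b ^ q) / 2 := by ring

/-- Strict convexity of `t ↦ t^q`. -/
lemma half_rpow_lt {q a b : ℝ} (hq : 1 < q) (ha : 0 ≤ a) (hb : 0 ≤ b) (hab : a ≠ b) :
    ((a + b) / 2) ^ q < (a ^ q + b ^ q) / 2 := by
  have := (strictConvexOn_rpow hq).2 (Set.mem_Ici.2 ha) (Set.mem_Ici.2 hb) hab
    (by norm_num : (0:ℝ) < 1/2) (by norm_num : (0:ℝ) < 1/2) (by norm_num)
  simp only [smul_eq_mul] at this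
  calc ((a + b) / 2) ^ q = (1/2 * a + 1/2 * b) ^ q := by ring_nf
    _ < 1/2 * a ^ q + 1/2 * b ^ q := this
    _ = (a ^ q + b ^ q) / 2 := by ring

/-- The key scalar lemma. -/
lemma key_scalar {q a₁ a₂ b₁ b₂ A B : ℝ} (hq : 1 < q)
    (ha₁ : 0 ≤ a₁) (ha₂ : 0 ≤ a₂) (hb₁ : 0 ≤ b₁) (hb₂ : 0 ≤ b₂) (hA : 0 ≤ A) (hB : 0 ≤ B)
    (htA : A ≤ a₁ + a₂) (htB : B ≤ b₁ + b₂)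
    (h1 : a₁ ^ q + b₁ ^ q = (A ^ q + B ^ q) / 2 ^ q)
    (h2 : a₂ ^ q + b₂ ^ q = (A ^ q + B ^ q) / 2 ^ q) :
    a₁ = A / 2 ∧ a₂ = A / 2 ∧ b₁ = B / 2 ∧ b₂ = B / 2 := by
  have hq0 : 0 < q := by linarith
  have h2q : (0:ℝ) < 2 ^ q := Real.rpow_pos_of_pos (by norm_num) q
  have hA2 : (A / 2) ^ q = A ^ q / 2 ^ q := Real.div_rpow hA (by norm_num) q
  have hB2 : (B / 2) ^ q = B ^ q / 2 ^ q := Real.div_rpow hB (by norm_num) q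
  -- chain of inequalities
  have e1 : (A / 2) ^ q ≤ ((a₁ + a₂) / 2) ^ q :=
    Real.rpow_le_rpow (by linarith) (by linarith) hq0.le
  have e2 : (B / 2) ^ q ≤ ((b₁ + b₂) / 2) ^ q :=
    Real.rpow_le_rpow (by linarith) (by linarith) hq0.le
  have e3 : ((a₁ + a₂) / 2) ^ q ≤ (a₁ ^ q + a₂ ^ q) / 2 := half_rpow_le hq ha₁ ha₂
  have e4 : ((b₁ + b₂) / 2) ^ q ≤ (b₁ ^ q + b₂ ^ q) / 2 := half_rpow_le hq hb₁ hb₂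
  have esum : (a₁ ^ q + a₂ ^ q) / 2 + (b₁ ^ q + b₂ ^ q) / 2 = (A / 2) ^ q + (B / 2) ^ q := by
    have hs : A ^ q / 2 ^ q + B ^ q / 2 ^ q = (A ^ q + B ^ q) / 2 ^ q := by ring
    rw [hA2, hB2, hs]; linarith
  -- all the inequalities are equalities
  have q1 : (A / 2) ^ q = ((a₁ + a₂) / 2) ^ q := le_antisymm e1 (by linarith)
  have q2 : (B / 2) ^ q = ((b₁ + b₂) / 2) ^ q := le_antisymm e2 (by linarith)
  have q3 : ((a₁ + a₂) / 2) ^ q = (a₁ ^ q + a₂ ^ q) / 2 := le_antisymm e3 (by linarith)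
  have q4 : ((b₁ + b₂) / 2) ^ q = (b₁ ^ q + b₂ ^ q) / 2 := le_antisymm e4 (by linarith)
  have ha : a₁ = a₂ := by
    by_contra h
    exact absurd q3 (ne_of_lt (half_rpow_lt hq ha₁ ha₂ h))
  have hb : b₁ = b₂ := by
    by_contra h
    exact absurd q4 (ne_of_lt (half_rpow_lt hq hb₁ hb₂ h))
  have hAeq : A = a₁ + a₂ := by
    rcases lt_or_eq_of_le htA with h | h
    · exact absurd q1 (ne_of_lt (Real.rpow_lt_rpow (by linarith) (by linarith) hq0))
    · exact h
  have hBeq : B = b₁ + b₂ := by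
    rcases lt_or_eq_of_le htB with h | h
    · exact absurd q2 (ne_of_lt (Real.rpow_lt_rpow (by linarith) (by linarith) hq0))
    · exact h
  refine ⟨by linarith, by linarith, by linarith, by linarith⟩

/-- A point `(x,y)` in the `q`-product `X ×_q Y` is a midpoint of `(x₁,y₁)` and `(x₂,y₂)`
iff `x` is a midpoint of `x₁, x₂` and `y` is a midpoint of `y₁, y₂`. -/
theorem stmt_0 {X Y : Type*} [MetricSpace X] [MetricSpace Y] (q : ℝ) (hq : 1 < q)
    (x₁ x₂ x : X) (y₁ y₂ y : Y) :
    (dq q (x₁, y₁) (x, y) = dq q (x₁, y₁) (x₂, y₂) / 2 ∧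
      dq q (x, y) (x₂, y₂) = dq q (x₁, y₁) (x₂, y₂) / 2) ↔
    (dist x₁ x = dist x₁ x₂ / 2 ∧ dist x x₂ = dist x₁ x₂ / 2 ∧
      dist y₁ y = dist y₁ y₂ / 2 ∧ dist y y₂ = dist y₁ y₂ / 2) := by
  have hq0 : 0 < q := by linarith
  have hq0' : q ≠ 0 := hq0.ne'
  have ha₁ : 0 ≤ dist x₁ x := dist_nonneg
  have ha₂ : 0 ≤ dist x x₂ := dist_nonneg
  have hA : 0 ≤ dist x₁ x₂ := dist_nonneg
  have hb₁ : 0 ≤ dist y₁ y := dist_nonneg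
  have hb₂ : 0 ≤ dist y y₂ := dist_nonneg
  have hB : 0 ≤ dist y₁ y₂ := dist_nonneg
  have hS : 0 ≤ dist x₁ x₂ ^ q + dist y₁ y₂ ^ q := by positivity
  have hD : ((dist x₁ x₂ ^ q + dist y₁ y₂ ^ q) ^ (1 / q)) ^ q
      = dist x₁ x₂ ^ q + dist y₁ y₂ ^ q := by
    rw [one_div, Real.rpow_inv_rpow hS hq0']
  have hdq1 : dq q (x₁, y₁) (x, y) = (dist x₁ x ^ q + dist y₁ y ^ q) ^ (1 / q) := rfl
  have hdq2 : dq q (x, y) (x₂, y₂) = (dist x x₂ ^ q + dist y y₂ ^ q) ^ (1 / q) := rfl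
  have hdq12 : dq q (x₁, y₁) (x₂, y₂) = (dist x₁ x₂ ^ q + dist y₁ y₂ ^ q) ^ (1 / q) := rfl
  constructor
  · rintro ⟨h1, h2⟩
    rw [hdq1, hdq12] at h1
    rw [hdq2, hdq12] at h2
    have hS1 : 0 ≤ dist x₁ x ^ q + dist y₁ y ^ q := by positivity
    have hS2 : 0 ≤ dist x x₂ ^ q + dist y y₂ ^ q := by positivity
    have e1 : dist x₁ x ^ q + dist y₁ y ^ q
        = (dist x₁ x₂ ^ q + dist y₁ y₂ ^ q) / 2 ^ q := by
      have := congrArg (· ^ q) h1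
      rwa [one_div, Real.rpow_inv_rpow hS1 hq0',
        Real.div_rpow (by positivity) (by norm_num : (0:ℝ) ≤ 2),
        Real.rpow_inv_rpow hS hq0'] at this
    have e2 : dist x x₂ ^ q + dist y y₂ ^ q
        = (dist x₁ x₂ ^ q + dist y₁ y₂ ^ q) / 2 ^ q := by
      have := congrArg (· ^ q) h2
      rwa [one_div, Real.rpow_inv_rpow hS2 hq0',
        Real.div_rpow (by positivity) (by norm_num : (0:ℝ) ≤ 2),
        Real.rpow_inv_rpow hS hq0'] at this
    have htA : dist x₁ x₂ ≤ dist x₁ x + dist x x₂ := dist_triangle x₁ x x₂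
    have htB : dist y₁ y₂ ≤ dist y₁ y + dist y y₂ := dist_triangle y₁ y y₂
    exact key_scalar hq ha₁ ha₂ hb₁ hb₂ hA hB htA htB e1 e2
  · rintro ⟨r1, r2, r3, r4⟩
    have hval : ((dist x₁ x₂ / 2) ^ q + (dist y₁ y₂ / 2) ^ q) ^ (1 / q)
        = (dist x₁ x₂ ^ q + dist y₁ y₂ ^ q) ^ (1 / q) / 2 := by
      rw [Real.div_rpow hA (by norm_num : (0:ℝ) ≤ 2) q,
        Real.div_rpow hB (by norm_num : (0:ℝ) ≤ 2) q, ← add_div,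
        Real.div_rpow hS (Real.rpow_nonneg (by norm_num) q), one_div,
        Real.rpow_rpow_inv (by norm_num : (0:ℝ) ≤ 2) hq0']
    constructor
    · rw [hdq1, hdq12, r1, r3, hval]
    · rw [hdq2, hdq12, r2, r4, hval]
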